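/- Let S be a nonempty finite set of positive integers with largest element J. For n ≥ 2J+1 define A_n(X) = ∑_{i∈S} (X^i + X^(n−i)) in (ZMod 2)[X] and v(n) = deg gcd(X^n − 1, A_n(X)). Then there exists a positive integer K such that: (i) v(n + K) = v(n) for all n ≥ 2J+1; (ii) for all n ≥ 2J+1, v(n) = 2J if and only if K divides n; and (iii) for all integers t ≥ 1 and r ≥ 1 with tK − r ≥ 2J+1, v(tK + r) = v(tK − r); i.e., the period of v-values has a unique largest entry 2J and is symmetric about the multiples of K. -/

import Mathlib

open Polynomial

/-- The `v`-value of the RS quadratic function with index set `S`: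
`v(n) = deg gcd(X^n - 1, ∑_{i∈S}(X^i + X^(n-i)))` over `ZMod 2`. -/
noncomputable def vVal (S : Finset ℕ) (n : ℕ) : ℕ :=
  (EuclideanDomain.gcd ((X : (ZMod 2)[X]) ^ n - 1)
    (∑ i ∈ S, ((X : (ZMod 2)[X]) ^ i + (X : (ZMod 2)[X]) ^ (n - i)))).natDegree

private lemma natDegree_eq_of_dvd_dvd {p q : (ZMod 2)[X]} (h1 : p ∣ q) (h2 : q ∣ p) :
    p.natDegree = q.natDegree := by
  rcases eq_or_ne q 0 with rfl | hq
  · obtain rfl : p = 0 := zero_dvd_iff.mp h2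
    rfl
  · have hp : p ≠ 0 := fun h => hq (zero_dvd_iff.mp (h ▸ h1))
    exact le_antisymm (Polynomial.natDegree_le_of_dvd h1 hq) (Polynomial.natDegree_le_of_dvd h2 hp)

private lemma dvd_X_pow_add {d : (ZMod 2)[X]} {a : ℕ} (h : d ∣ (X : (ZMod 2)[X]) ^ a - 1)
    (b : ℕ) : d ∣ (X : (ZMod 2)[X]) ^ (a + b) - 1 ↔ d ∣ (X : (ZMod 2)[X]) ^ b - 1 := by
  constructor
  · intro h2
    have e : (X : (ZMod 2)[X]) ^ b - 1 = ((X : (ZMod 2)[X]) ^ (a + b) - 1) - X ^ b * (X ^ a - 1) := by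
      rw [pow_add]; ring
    rw [e]
    exact dvd_sub h2 (h.mul_left _)
  · intro h2
    have e : (X : (ZMod 2)[X]) ^ (a + b) - 1 = X ^ b * (X ^ a - 1) + (X ^ b - 1) := by
      rw [pow_add]; ring
    rw [e]
    exact dvd_add (h.mul_left _) h2

private lemma dvd_X_pow_symm {d : (ZMod 2)[X]} {a b : ℕ}
    (h : d ∣ (X : (ZMod 2)[X]) ^ (a + b) - 1) :
    d ∣ (X : (ZMod 2)[X]) ^ a - 1 ↔ d ∣ (X : (ZMod 2)[X]) ^ b - 1 := by
  constructor
  · intro h2; exact (dvd_X_pow_add h2 b).mp h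
  · intro h2; exact (dvd_X_pow_add h2 a).mp (by rwa [Nat.add_comm] at h)

private lemma pow_sub_one_dvd_pow_sub_one {a b : ℕ} (h : a ∣ b) :
    ((X : (ZMod 2)[X]) ^ a - 1) ∣ ((X : (ZMod 2)[X]) ^ b - 1) := by
  obtain ⟨c, rfl⟩ := h
  have := sub_dvd_pow_sub_pow ((X : (ZMod 2)[X]) ^ a) 1 c
  simpa [pow_mul] using this

/-- The sequence of `v`-values is periodic with a unique largest entry `2J` occurring
exactly at the multiples of the period `K`, and is symmetric about those multiples. -/
theorem v_value_period_symmetric (S : Finset ℕ) (hS : S.Nonempty)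
    (hpos : ∀ i ∈ S, 1 ≤ i) (J : ℕ) (hJ : J = S.max' hS) :
    ∃ K : ℕ, 1 ≤ K ∧
      (∀ n, 2 * J + 1 ≤ n → vVal S (n + K) = vVal S n) ∧
      (∀ n, 2 * J + 1 ≤ n → (vVal S n = 2 * J ↔ K ∣ n)) ∧
      (∀ t r : ℕ, 1 ≤ t → 1 ≤ r → 2 * J + 1 ≤ t * K - r →
        vVal S (t * K + r) = vVal S (t * K - r)) := by
  classical
  have hJS : J ∈ S := hJ ▸ S.max'_mem hS
  have hJ1 : 1 ≤ J := hpos J hJS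
  have hle : ∀ i ∈ S, i ≤ J := fun i hi => hJ ▸ S.le_max' i hi
  set C : (ZMod 2)[X] := ∑ i ∈ S, ((X : (ZMod 2)[X]) ^ (J + i) + X ^ (J - i)) with hC
  -- top coefficient of C
  have hc2J : C.coeff (2 * J) = 1 := by
    rw [hC, Polynomial.finset_sum_coeff]
    have hcongr : ∀ i ∈ S,
        ((X : (ZMod 2)[X]) ^ (J + i) + X ^ (J - i)).coeff (2 * J)
          = if i = J then 1 else 0 := by
      intro i hi
      have h1 := hpos i hi; have h2 := hle i hi
      simp only [Polynomial.coeff_add, Polynomial.coeff_X_pow]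
      by_cases h : i = J
      · rw [if_pos (by omega), if_neg (by omega), if_pos h, add_zero]
      · rw [if_neg (by omega), if_neg (by omega), if_neg h, add_zero]
    rw [Finset.sum_congr rfl hcongr, Finset.sum_ite_eq' S J (fun _ => (1 : ZMod 2)), if_pos hJS]
  -- constant coefficient of C
  have hc0 : C.coeff 0 = 1 := by
    rw [hC, Polynomial.finset_sum_coeff]
    have hcongr : ∀ i ∈ S,
        ((X : (ZMod 2)[X]) ^ (J + i) + X ^ (J - i)).coeff 0
          = if i = J then 1 else 0 := by
      intro i hi
      have h1 := hpos i hi; have h2 := hle i hi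
      simp only [Polynomial.coeff_add, Polynomial.coeff_X_pow]
      by_cases h : i = J
      · rw [if_neg (by omega), if_pos (by omega), if_pos h, zero_add]
      · rw [if_neg (by omega), if_neg (by omega), if_neg h, zero_add]
    rw [Finset.sum_congr rfl hcongr, Finset.sum_ite_eq' S J (fun _ => (1 : ZMod 2)), if_pos hJS]
  have hCne : C ≠ 0 := by
    intro h
    rw [h] at hc0
    simp at hc0
  have hXC : ¬ (X : (ZMod 2)[X]) ∣ C := by
    rw [Polynomial.X_dvd_iff, hc0]
    exact one_ne_zero
  have hdegC : C.natDegree = 2 * J := by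
    refine le_antisymm ?_ (Polynomial.le_natDegree_of_ne_zero (by rw [hc2J]; exact one_ne_zero))
    refine Polynomial.natDegree_sum_le_of_forall_le S _ fun i hi => ?_
    have h2 := hle i hi
    refine (Polynomial.natDegree_add_le _ _).trans ?_
    simp only [Polynomial.natDegree_X_pow, max_le_iff]
    omega
  have hmonic : C.Monic := by
    have : C.leadingCoeff = 1 := by rw [Polynomial.leadingCoeff, hdegC, hc2J]
    exact this
  -- X does not divide X^m - 1 for m ≥ 1
  have hXn1 : ∀ m : ℕ, 1 ≤ m → ¬ (X : (ZMod 2)[X]) ∣ (X ^ m - 1) := by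
    intro m hm h
    rw [Polynomial.X_dvd_iff, Polynomial.coeff_sub, Polynomial.coeff_X_pow,
      Polynomial.coeff_one] at h
    rw [if_neg (by omega : ¬ (0 : ℕ) = m), if_pos rfl] at h
    revert h; decide
  -- existence of a positive N with C ∣ X^N - 1, by pigeonhole
  haveI : Finite (Polynomial.degreeLT (ZMod 2) (2 * J)) :=
    Finite.of_equiv _ (Polynomial.degreeLTEquiv (ZMod 2) (2 * J)).toEquiv.symm
  have hdegC' : C.degree = ((2 * J : ℕ) : WithBot ℕ) := by
    rw [Polynomial.degree_eq_natDegree hCne, hdegC]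
  have hmem : ∀ m : ℕ, (X : (ZMod 2)[X]) ^ m %ₘ C ∈ Polynomial.degreeLT (ZMod 2) (2 * J) := by
    intro m
    rw [Polynomial.mem_degreeLT, ← hdegC']
    exact Polynomial.degree_modByMonic_lt _ hmonic
  have main : ∀ a b : ℕ, a < b → (X : (ZMod 2)[X]) ^ a %ₘ C = X ^ b %ₘ C →
      ∃ N, 0 < N ∧ C ∣ (X : (ZMod 2)[X]) ^ N - 1 := by
    intro a b hlt he
    refine ⟨b - a, by omega, ?_⟩
    have e1 : (X : (ZMod 2)[X]) ^ a %ₘ C = X ^ a - C * (X ^ a /ₘ C) :=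
      Polynomial.modByMonic_eq_sub_mul_div _ C
    have e2 : (X : (ZMod 2)[X]) ^ b %ₘ C = X ^ b - C * (X ^ b /ₘ C) :=
      Polynomial.modByMonic_eq_sub_mul_div _ C
    rw [e1, e2] at he
    have h1 : C ∣ (X : (ZMod 2)[X]) ^ b - X ^ a :=
      ⟨X ^ b /ₘ C - X ^ a /ₘ C, by linear_combination -he⟩
    have h2 : (X : (ZMod 2)[X]) ^ b - X ^ a = X ^ a * (X ^ (b - a) - 1) := by
      have hba : a + (b - a) = b := by omega
      rw [mul_sub, mul_one, ← pow_add, hba]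
    have hcop : IsCoprime C ((X : (ZMod 2)[X]) ^ a) :=
      ((Polynomial.prime_X.coprime_iff_not_dvd.mpr hXC).symm.pow_right)
    exact hcop.dvd_of_dvd_mul_left (h2 ▸ h1)
  have hexists : ∃ N, 0 < N ∧ C ∣ (X : (ZMod 2)[X]) ^ N - 1 := by
    obtain ⟨a, b, hab, heq⟩ := Finite.exists_ne_map_eq_of_infinite
      (fun m : ℕ => (⟨X ^ m %ₘ C, hmem m⟩ : Polynomial.degreeLT (ZMod 2) (2 * J)))
    have heq' : (X : (ZMod 2)[X]) ^ a %ₘ C = X ^ b %ₘ C := congrArg Subtype.val heq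
    rcases lt_or_gt_of_ne hab with h | h
    · exact main a b h heq'
    · exact main b a h heq'.symm
  set K := Nat.find hexists with hKdef
  obtain ⟨hKpos, hCK⟩ := Nat.find_spec hexists
  have hmin : ∀ m, 0 < m → m < K → ¬ C ∣ (X : (ZMod 2)[X]) ^ m - 1 :=
    fun m hm hmK hd => Nat.find_min hexists hmK ⟨hm, hd⟩
  have hdvd_iff : ∀ n : ℕ, (C ∣ (X : (ZMod 2)[X]) ^ n - 1) ↔ K ∣ n := by
    intro n
    constructor
    · intro h
      have hq : C ∣ (X : (ZMod 2)[X]) ^ (K * (n / K)) - 1 :=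
        hCK.trans (pow_sub_one_dvd_pow_sub_one ⟨n / K, rfl⟩)
      have hn' : C ∣ (X : (ZMod 2)[X]) ^ (K * (n / K) + n % K) - 1 := by
        rw [Nat.div_add_mod]; exact h
      have hr : C ∣ (X : (ZMod 2)[X]) ^ (n % K) - 1 := (dvd_X_pow_add hq (n % K)).mp hn'
      rcases Nat.eq_zero_or_pos (n % K) with h0 | hp
      · exact Nat.dvd_of_mod_eq_zero h0
      · exact absurd hr (hmin _ hp (Nat.mod_lt _ hKpos))
    · intro h
      exact hCK.trans (pow_sub_one_dvd_pow_sub_one h)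
  -- reduction: vVal S n = deg gcd(X^n - 1, C) for n ≥ 2J+1
  have hred : ∀ n : ℕ, 2 * J + 1 ≤ n → vVal S n =
      (EuclideanDomain.gcd ((X : (ZMod 2)[X]) ^ n - 1) C).natDegree := by
    intro n hn
    set A : (ZMod 2)[X] := ∑ i ∈ S, ((X : (ZMod 2)[X]) ^ i + X ^ (n - i)) with hA
    set Bt : (ZMod 2)[X] := ∑ i ∈ S, (X : (ZMod 2)[X]) ^ (J - i) with hBt
    have key : (X : (ZMod 2)[X]) ^ J * A = C + (X ^ n - 1) * Bt := by
      rw [hA, hC, hBt, Finset.mul_sum, Finset.mul_sum, ← Finset.sum_add_distrib]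
      refine Finset.sum_congr rfl fun i hi => ?_
      have h1 := hpos i hi; have h2 := hle i hi
      have h3 : J + (n - i) = n + (J - i) := by omega
      rw [mul_add, ← pow_add, ← pow_add, h3]
      ring
    set d1 := EuclideanDomain.gcd ((X : (ZMod 2)[X]) ^ n - 1) A with hd1
    set d2 := EuclideanDomain.gcd ((X : (ZMod 2)[X]) ^ n - 1) C with hd2
    have h12 : d1 ∣ d2 := by
      refine EuclideanDomain.dvd_gcd (EuclideanDomain.gcd_dvd_left _ _) ?_
      have e : C = (X : (ZMod 2)[X]) ^ J * A - (X ^ n - 1) * Bt := by rw [key]; ring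
      rw [e]
      exact dvd_sub ((EuclideanDomain.gcd_dvd_right _ _).mul_left _)
        ((EuclideanDomain.gcd_dvd_left _ _).mul_right _)
    have h21 : d2 ∣ d1 := by
      refine EuclideanDomain.dvd_gcd (EuclideanDomain.gcd_dvd_left _ _) ?_
      have hd2X : ¬ (X : (ZMod 2)[X]) ∣ d2 :=
        fun h => hXn1 n (by omega) (h.trans (EuclideanDomain.gcd_dvd_left _ _))
      have hcop : IsCoprime d2 ((X : (ZMod 2)[X]) ^ J) :=
        ((Polynomial.prime_X.coprime_iff_not_dvd.mpr hd2X).symm.pow_right)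
      refine hcop.dvd_of_dvd_mul_left ?_
      rw [key]
      exact dvd_add (EuclideanDomain.gcd_dvd_right _ _)
        ((EuclideanDomain.gcd_dvd_left _ _).mul_right _)
    have : vVal S n = d1.natDegree := rfl
    rw [this]
    exact natDegree_eq_of_dvd_dvd h12 h21
  refine ⟨K, hKpos, ?_, ?_, ?_⟩
  · -- periodicity
    intro n hn
    rw [hred n hn, hred (n + K) (by omega)]
    apply natDegree_eq_of_dvd_dvd
    · set d := EuclideanDomain.gcd ((X : (ZMod 2)[X]) ^ (n + K) - 1) C with hd
      refine EuclideanDomain.dvd_gcd ?_ (EuclideanDomain.gcd_dvd_right _ _)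
      have hdK : d ∣ (X : (ZMod 2)[X]) ^ K - 1 :=
        (EuclideanDomain.gcd_dvd_right _ _).trans hCK
      have h' : d ∣ (X : (ZMod 2)[X]) ^ (n + K) - 1 := EuclideanDomain.gcd_dvd_left _ _
      rw [Nat.add_comm n K] at h'
      exact (dvd_X_pow_add hdK n).mp h'
    · set d := EuclideanDomain.gcd ((X : (ZMod 2)[X]) ^ n - 1) C with hd
      refine EuclideanDomain.dvd_gcd ?_ (EuclideanDomain.gcd_dvd_right _ _)
      have hdK : d ∣ (X : (ZMod 2)[X]) ^ K - 1 :=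
        (EuclideanDomain.gcd_dvd_right _ _).trans hCK
      have h' : d ∣ (X : (ZMod 2)[X]) ^ (K + n) - 1 :=
        (dvd_X_pow_add hdK n).mpr (EuclideanDomain.gcd_dvd_left _ _)
      rwa [Nat.add_comm K n] at h'
  · -- the maximum value 2J exactly at multiples of K
    intro n hn
    rw [hred n hn]
    constructor
    · intro h
      set g := EuclideanDomain.gcd ((X : (ZMod 2)[X]) ^ n - 1) C with hg
      obtain ⟨c, hc⟩ := EuclideanDomain.gcd_dvd_right ((X : (ZMod 2)[X]) ^ n - 1) C
      have hg0 : g ≠ 0 := fun h0 => hCne (by rw [hc, ← hg, h0, zero_mul])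
      have hcne : c ≠ 0 := fun h0 => hCne (by rw [hc, h0, mul_zero])
      have hdeg : C.natDegree = g.natDegree + c.natDegree := by
        rw [hc, Polynomial.natDegree_mul hg0 hcne]
      have hcdeg : c.natDegree = 0 := by
        rw [hdegC] at hdeg; rw [h] at hdeg; omega
      have hcu : IsUnit c := by
        have hcc := Polynomial.eq_C_of_natDegree_eq_zero hcdeg
        rw [hcc, Polynomial.isUnit_C]
        exact isUnit_iff_ne_zero.mpr fun h0 => hcne (by rw [hcc, h0, map_zero])
      obtain ⟨u, rfl⟩ := hcu
      have hCg : C ∣ g := ⟨(↑u⁻¹ : (ZMod 2)[X]), by rw [hc, mul_assoc]; simp; exact hg⟩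
      exact (hdvd_iff n).mp (hCg.trans (EuclideanDomain.gcd_dvd_left _ _))
    · intro h
      have hCd : C ∣ EuclideanDomain.gcd ((X : (ZMod 2)[X]) ^ n - 1) C :=
        EuclideanDomain.dvd_gcd ((hdvd_iff n).mpr h) dvd_rfl
      rw [← hdegC]
      exact natDegree_eq_of_dvd_dvd (EuclideanDomain.gcd_dvd_right _ _) hCd
  · -- symmetry about multiples of K
    intro t r ht hr htr
    have hrK : r < t * K := by omega
    set s := t * K - r with hs
    have hsr : s + r = t * K := by omega
    have hCtK : C ∣ (X : (ZMod 2)[X]) ^ (s + r) - 1 := by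
      rw [hsr]
      exact (hdvd_iff _).mpr ⟨t, mul_comm t K⟩
    rw [hred _ (by omega), hred _ (by omega)]
    apply natDegree_eq_of_dvd_dvd
    · set d := EuclideanDomain.gcd ((X : (ZMod 2)[X]) ^ (t * K + r) - 1) C with hd
      refine EuclideanDomain.dvd_gcd ?_ (EuclideanDomain.gcd_dvd_right _ _)
      have hdsr : d ∣ (X : (ZMod 2)[X]) ^ (s + r) - 1 :=
        (EuclideanDomain.gcd_dvd_right _ _).trans hCtK
      have hdtop : d ∣ (X : (ZMod 2)[X]) ^ ((s + r) + r) - 1 := by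
        have h' : d ∣ (X : (ZMod 2)[X]) ^ (t * K + r) - 1 := EuclideanDomain.gcd_dvd_left _ _
        rwa [show t * K + r = (s + r) + r by omega] at h'
      have hdr : d ∣ (X : (ZMod 2)[X]) ^ r - 1 := (dvd_X_pow_add hdsr r).mp hdtop
      exact (dvd_X_pow_symm hdsr).mpr hdr
    · set d := EuclideanDomain.gcd ((X : (ZMod 2)[X]) ^ s - 1) C with hd
      refine EuclideanDomain.dvd_gcd ?_ (EuclideanDomain.gcd_dvd_right _ _)
      have hdsr : d ∣ (X : (ZMod 2)[X]) ^ (s + r) - 1 :=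
        (EuclideanDomain.gcd_dvd_right _ _).trans hCtK
      have hdr : d ∣ (X : (ZMod 2)[X]) ^ r - 1 :=
        (dvd_X_pow_symm hdsr).mp (EuclideanDomain.gcd_dvd_left _ _)
      have hdtop : d ∣ (X : (ZMod 2)[X]) ^ ((s + r) + r) - 1 := (dvd_X_pow_add hdsr r).mpr hdr
      rwa [show (s + r) + r = t * K + r by omega] at hdtop
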